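/- Let p be a prime. If a partition λ of d with at most n parts satisfies James' condition, then λ satisfies the Doty digit condition. -/

import Mathlib

/-- `l` is a partition of `d` with at most `n` parts: a weakly decreasing tuple
(indexed from 0, vanishing from index `n` on) of nonnegative integers summing to `d`. -/
def IsPartition (n d : ℕ) (l : ℕ → ℕ) : Prop :=
  Antitone l ∧ (∀ i, n ≤ i → l i = 0) ∧ ∑ i ∈ Finset.range n, l i = d

/-- Doty digit condition: if the `j`-th base-`p` digit of the `i`-th part is not `p - 1`,
then the `j`-th digit of every later part is `0`. -/
def DotyCondition (p : ℕ) (l : ℕ → ℕ) : Prop :=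
  ∀ i j i', i < i' → (l i / p ^ j) % p ≠ p - 1 → (l i' / p ^ j) % p = 0

/-- `lpexp p t` is the least nonnegative integer `l` with `t < p ^ l`. -/
noncomputable def lpexp (p t : ℕ) : ℕ := sInf {l : ℕ | t < p ^ l}

/-- James' condition: consecutive parts satisfy `λ_i ≡ -1 (mod p ^ lpexp p (λ_{i+1}))`
(indices `0 ≤ i`, `i + 1 < n` in 0-based indexing). -/
def JamesCondition (p n : ℕ) (l : ℕ → ℕ) : Prop :=
  ∀ i, i + 1 < n → p ^ lpexp p (l (i + 1)) ∣ l i + 1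

theorem james_implies_doty (p n d : ℕ) (hp : p.Prime)
    (lam : ℕ → ℕ) (hlam : IsPartition n d lam) (hJ : JamesCondition p n lam) :
    DotyCondition p lam := by
  obtain ⟨hanti, hzero, -⟩ := hlam
  have hp2 : 2 ≤ p := hp.two_le
  -- auxiliary: (a*m - 1) / a = m - 1
  have hdiv : ∀ a m : ℕ, 0 < a → 0 < m → (a * m - 1) / a = m - 1 := by
    intro a m ha hm
    have h1 : a * (m - 1) = a * m - a := by rw [Nat.mul_sub]; ring_nf
    have h2 : a ≤ a * m := Nat.le_mul_of_pos_right a hm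
    have h3 : a * m - 1 = a * (m - 1) + (a - 1) := by omega
    rw [h3, Nat.mul_add_div ha, Nat.div_eq_of_lt (by omega)]
    omega
  -- consecutive step
  have step : ∀ i j, (lam i / p ^ j) % p ≠ p - 1 → (lam (i + 1) / p ^ j) % p = 0 := by
    intro i j hne
    by_cases hn : i + 1 < n
    · have hJ' := hJ i hn
      set L := lpexp p (lam (i + 1)) with hLdef
      have hset : {l : ℕ | lam (i + 1) < p ^ l}.Nonempty :=
        ⟨lam (i + 1), Nat.lt_pow_self (by omega : 1 < p)⟩
      have hmem : lam (i + 1) < p ^ L := Nat.sInf_mem hset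
      have hLj : L ≤ j := by
        by_contra hcon
        push_neg at hcon
        apply hne
        obtain ⟨k, hk⟩ := hJ'
        have hppow : 0 < p ^ j := Nat.pow_pos (by omega)
        have hk1 : 0 < k := by
          rcases Nat.eq_zero_or_pos k with h | h
          · simp [h] at hk
          · exact h
        have hsplit : p ^ L = p ^ j * p ^ (L - j) := by
          rw [← pow_add]; congr 1; omega
        have hlameq : lam i = p ^ j * (p ^ (L - j) * k) - 1 := by
          rw [← mul_assoc, ← hsplit]; omega
        have hm1 : 0 < p ^ (L - j) * k :=
          Nat.mul_pos (Nat.pow_pos (by omega)) hk1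
        rw [hlameq, hdiv _ _ hppow hm1]
        -- now (p^(L-j) * k - 1) % p = p - 1
        have hsplit2 : p ^ (L - j) = p * p ^ (L - j - 1) := by
          rw [← pow_succ']; congr 1; omega
        have ht1 : 0 < p ^ (L - j - 1) * k :=
          Nat.mul_pos (Nat.pow_pos (by omega)) hk1
        have heq2 : p ^ (L - j) * k - 1 = p * (p ^ (L - j - 1) * k - 1) + (p - 1) := by
          have : p ^ (L - j) * k = p * (p ^ (L - j - 1) * k) := by
            rw [hsplit2]; ring
          have h2 : p * (p ^ (L - j - 1) * k - 1) = p * (p ^ (L - j - 1) * k) - p := by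
            rw [Nat.mul_sub]; ring_nf
          have h3 : p ≤ p * (p ^ (L - j - 1) * k) := Nat.le_mul_of_pos_right p ht1
          omega
        rw [heq2, Nat.mul_add_mod, Nat.mod_eq_of_lt (by omega)]
      have hlt : lam (i + 1) < p ^ j :=
        lt_of_lt_of_le hmem (Nat.pow_le_pow_right (by omega) hLj)
      simp [Nat.div_eq_of_lt hlt]
    · have h0 : lam (i + 1) = 0 := hzero _ (by omega)
      simp [h0]
  intro i j i' hlt hne
  induction i', hlt using Nat.le_induction with
  | base => exact step i j hne
  | succ m hm ih =>
    refine step m j ?_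
    rw [ih]
    omega
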